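/- Cographic matroids are O(k)-coverable: there is a constant C such that if M is the cographic matroid of a connected graph G = (V, E), then for every independent set X with |X| ≤ k there exists F ⊆ E with |F| ≤ C·k such that span_M(X) = ⋃_{f∈F} span_M(f). -/

import Mathlib

open Set

namespace Stmt6

variable {V : Type} 

/-- An edge crosses a vertex set. -/
def cross (A : Set V) (e : Sym2 V) : Prop := ∃ a b, e = s(a,b) ∧ a ∈ A ∧ b ∉ A

lemma cross_mk {A : Set V} {a b : V} : cross A s(a,b) ↔ ((a ∈ A ∧ b ∉ A) ∨ (b ∈ A ∧ a ∉ A)) := by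
  constructor
  · rintro ⟨c, d, hcd, hc, hd⟩
    rw [Sym2.eq_iff] at hcd
    rcases hcd with ⟨rfl, rfl⟩ | ⟨rfl, rfl⟩
    · exact Or.inl ⟨hc, hd⟩
    · exact Or.inr ⟨hc, hd⟩
  · rintro (⟨h1, h2⟩ | ⟨h1, h2⟩)
    · exact ⟨a, b, rfl, h1, h2⟩
    · exact ⟨b, a, Sym2.eq_swap, h1, h2⟩

lemma cross_compl {A : Set V} {e : Sym2 V} : cross Aᶜ e ↔ cross A e := by
  induction e using Sym2.inductionOn with
  | hf a b => simp only [cross_mk, mem_compl_iff, not_not]; tauto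

lemma cross_symmDiff {A B : Set V} {e : Sym2 V} :
    cross (symmDiff A B) e ↔ (cross A e ↔ ¬ cross B e) := by
  induction e using Sym2.inductionOn with
  | hf a b =>
    by_cases ha : a ∈ A <;> by_cases hb : b ∈ A <;> by_cases ha' : a ∈ B <;>
      by_cases hb' : b ∈ B <;>
      simp [cross_mk, Set.mem_symmDiff, ha, hb, ha', hb']

/-- A walk from inside `A` to outside `A` has a crossing step. -/
lemma walk_cross {K : SimpleGraph V} {A : Set V} :
    ∀ {u v : V} (_ : K.Walk u v), u ∈ A → v ∉ A →
      ∃ a b, K.Adj a b ∧ a ∈ A ∧ b ∉ A := by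
  intro u v p
  induction p with
  | nil => intro h h'; exact absurd h h'
  | @cons x y z h q ih =>
    intro hu hv
    by_cases hy : y ∈ A
    · exact ih hy hv
    · exact ⟨x, y, h, hu, hy⟩

/-- A walk starting in a "closed" set `A` transfers to reachability in another graph. -/
lemma walk_transfer {K K' : SimpleGraph V} {A : Set V}
    (hcl : ∀ a b, K.Adj a b → a ∈ A → b ∈ A)
    (hadj : ∀ a b, K.Adj a b → a ∈ A → b ∈ A → K'.Adj a b) :
    ∀ {u v : V} (_ : K.Walk u v), u ∈ A → K'.Reachable u v := by
  intro u v p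
  induction p with
  | nil => intro _; exact SimpleGraph.Reachable.refl _
  | @cons x y z h q ih =>
    intro hu
    have hy : y ∈ A := hcl _ _ h hu
    exact (SimpleGraph.Adj.reachable (hadj _ _ h hu hy)).trans (ih hy)

/-- Decomposition of reachability along a walk with respect to a single deleted edge. -/
lemma reach_three {K : SimpleGraph V} {a₀ b₀ : V} :
    ∀ {u v : V} (_ : K.Walk u v),
      (K.deleteEdges {s(a₀,b₀)}).Reachable u v ∨
        (((K.deleteEdges {s(a₀,b₀)}).Reachable u a₀ ∨ (K.deleteEdges {s(a₀,b₀)}).Reachable u b₀) ∧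
         ((K.deleteEdges {s(a₀,b₀)}).Reachable a₀ v ∨ (K.deleteEdges {s(a₀,b₀)}).Reachable b₀ v)) := by
  intro u v p
  set K' := K.deleteEdges {s(a₀,b₀)} with hK'
  induction p with
  | nil => exact Or.inl (SimpleGraph.Reachable.refl _)
  | @cons x y z h q ih =>
    by_cases he : s(x,y) = s(a₀,b₀)
    · -- this step is the deleted edge
      rw [Sym2.eq_iff] at he
      have hx : x = a₀ ∨ x = b₀ := by tauto
      have hy : y = a₀ ∨ y = b₀ := by tauto
      refine Or.inr ⟨?_, ?_⟩
      · rcases hx with rfl | rfl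
        · exact Or.inl (SimpleGraph.Reachable.refl _)
        · exact Or.inr (SimpleGraph.Reachable.refl _)
      · rcases ih with h' | ⟨_, h2⟩
        · rcases hy with rfl | rfl
          · exact Or.inl h'
          · exact Or.inr h'
        · exact h2
    · have hadj : K'.Adj x y := by
        rw [hK', SimpleGraph.deleteEdges_adj]
        exact ⟨h, by simpa using he⟩
      rcases ih with h' | ⟨h1, h2⟩
      · exact Or.inl ((hadj.reachable).trans h')
      · refine Or.inr ⟨?_, h2⟩
        rcases h1 with h1 | h1
        · exact Or.inl ((hadj.reachable).trans h1)
        · exact Or.inr ((hadj.reachable).trans h1)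

end Stmt6

namespace Stmt6

variable {V : Type}

/-- Connectivity in terms of crossing edges of cuts. -/
lemma connected_iff_cross (K : SimpleGraph V) :
    K.Connected ↔ Nonempty V ∧
      ∀ A : Set V, A.Nonempty → Aᶜ.Nonempty → ∃ e ∈ K.edgeSet, cross A e := by
  constructor
  · intro hK
    refine ⟨hK.nonempty, fun A ⟨u, hu⟩ ⟨w, hw⟩ => ?_⟩
    obtain ⟨p⟩ := hK.preconnected u w
    obtain ⟨a, b, hab, ha, hb⟩ := walk_cross p hu hw
    exact ⟨s(a,b), hab, cross_mk.mpr (Or.inl ⟨ha, hb⟩)⟩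
  · rintro ⟨hne, h⟩
    rw [SimpleGraph.connected_iff]
    refine ⟨fun u v => ?_, hne⟩
    by_contra hc
    obtain ⟨e, he, hcr⟩ := h {z | K.Reachable u z} ⟨u, SimpleGraph.Reachable.refl u⟩ ⟨v, hc⟩
    obtain ⟨a, b, rfl, ha, hb⟩ := hcr
    rw [SimpleGraph.mem_edgeSet] at he
    exact hb (ha.trans he.reachable)

end Stmt6

namespace Stmt6

variable {V : Type} {H : SimpleGraph V} {r : V} {e : Sym2 V} {A : Set V}

/-- `A` is the side of a bridge `e` of `H` not containing the root `r`. -/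
def IsSide (H : SimpleGraph V) (r : V) (e : Sym2 V) (A : Set V) : Prop :=
  r ∉ A ∧ A.Nonempty ∧ e ∈ H.edgeSet ∧ cross A e ∧ ∀ f ∈ H.edgeSet, cross A f → f = e

lemma IsSide.closed (hA : IsSide H r e A) {a b : V}
    (hab : (H.deleteEdges {e}).Adj a b) (ha : a ∈ A) : b ∈ A := by
  by_contra hb
  rw [SimpleGraph.deleteEdges_adj] at hab
  exact hab.2 (by simpa using hA.2.2.2.2 s(a,b) hab.1 (cross_mk.mpr (Or.inl ⟨ha, hb⟩)))

lemma IsSide.closed_compl (hA : IsSide H r e A) {a b : V}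
    (hab : (H.deleteEdges {e}).Adj a b) (ha : a ∉ A) : b ∉ A := by
  intro hb
  rw [SimpleGraph.deleteEdges_adj] at hab
  exact hab.2 (by simpa using hA.2.2.2.2 s(a,b) hab.1 (cross_mk.mpr (Or.inr ⟨hb, ha⟩)))

lemma IsSide.nocross (hA : IsSide H r e A) {u v : V} (hu : u ∈ A) (hv : v ∉ A) :
    ¬ (H.deleteEdges {e}).Reachable u v := by
  rintro ⟨p⟩
  obtain ⟨a, b, hab, ha, hb⟩ := walk_cross p hu hv
  exact hb (hA.closed hab ha)

lemma IsSide.nocross' (hA : IsSide H r e A) {u v : V} (hu : u ∉ A) (hv : v ∈ A) :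
    ¬ (H.deleteEdges {e}).Reachable u v :=
  fun h => hA.nocross hv hu h.symm

/-- Orientation of the bridge: `e = s(a₀, b₀)` with `b₀ ∈ A`, `a₀ ∉ A`. -/
lemma IsSide.orient (hA : IsSide H r e A) :
    ∃ a₀ b₀, e = s(a₀, b₀) ∧ a₀ ∉ A ∧ b₀ ∈ A := by
  obtain ⟨b₀, a₀, h, hb, ha⟩ := hA.2.2.2.1
  exact ⟨a₀, b₀, h.trans Sym2.eq_swap, ha, hb⟩

lemma IsSide.reach_of_mem (hH : H.Connected) (hA : IsSide H r e A) {u v : V}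
    (hu : u ∈ A) (hv : v ∈ A) : (H.deleteEdges {e}).Reachable u v := by
  obtain ⟨a₀, b₀, he, ha₀, hb₀⟩ := hA.orient
  obtain ⟨p⟩ := hH.preconnected u v
  subst he
  rcases reach_three (a₀ := a₀) (b₀ := b₀) p with h | ⟨h1, h2⟩
  · exact h
  · have h1' : (H.deleteEdges {s(a₀,b₀)}).Reachable u b₀ :=
      h1.resolve_left (hA.nocross hu ha₀)
    have h2' : (H.deleteEdges {s(a₀,b₀)}).Reachable b₀ v :=
      h2.resolve_left (hA.nocross' ha₀ hv)
    exact h1'.trans h2'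

lemma IsSide.mem_iff (hH : H.Connected) (hA : IsSide H r e A) (v : V) :
    v ∈ A ↔ ¬ (H.deleteEdges {e}).Reachable r v := by
  constructor
  · intro hv; exact hA.nocross' hA.1 hv
  · intro hv
    by_contra hvA
    apply hv
    obtain ⟨a₀, b₀, he, ha₀, hb₀⟩ := hA.orient
    obtain ⟨p⟩ := hH.preconnected r v
    subst he
    rcases reach_three (a₀ := a₀) (b₀ := b₀) p with h | ⟨h1, h2⟩
    · exact h
    · have h1' : (H.deleteEdges {s(a₀,b₀)}).Reachable r a₀ :=
        h1.resolve_right (hA.nocross' hA.1 hb₀)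
      have h2' : (H.deleteEdges {s(a₀,b₀)}).Reachable a₀ v :=
        h2.resolve_right (hA.nocross hb₀ hvA)
      exact h1'.trans h2'

lemma IsSide.reach_of_not_mem (hH : H.Connected) (hA : IsSide H r e A) {u v : V}
    (hu : u ∉ A) (hv : v ∉ A) : (H.deleteEdges {e}).Reachable u v := by
  have h1 := (hA.mem_iff hH u)
  have h2 := (hA.mem_iff hH v)
  have hru : (H.deleteEdges {e}).Reachable r u := not_not.mp (fun h => hu (h1.mpr h))
  have hrv : (H.deleteEdges {e}).Reachable r v := not_not.mp (fun h => hv (h2.mpr h))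
  exact hru.symm.trans hrv
  
end Stmt6

namespace Stmt6

variable {V : Type} {H : SimpleGraph V} {r : V} {e f : Sym2 V} {A B : Set V}

lemma IsSide.not_cross (hA : IsSide H r e A) (hf : f ∈ H.edgeSet) (hfe : f ≠ e) :
    ¬ cross A f := fun h => hfe (hA.2.2.2.2 f hf h)

/-- Laminarity of bridge sides. -/
lemma IsSide.laminar (hH : H.Connected) (hA : IsSide H r e A) (hB : IsSide H r f B)
    (hef : e ≠ f) : A ⊆ B ∨ B ⊆ A ∨ A ∩ B = ∅ := by
  obtain ⟨a₁, b₁, hf, ha₁, hb₁⟩ := hB.orient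
  have hfH : f ∈ H.edgeSet := hB.2.2.1
  have hnc : ¬ cross A f := hA.not_cross hfH (Ne.symm hef)
  rw [hf, cross_mk] at hnc
  push_neg at hnc
  by_cases hcase : a₁ ∈ A
  · -- both endpoints of f in A; show B ⊆ A
    have hb₁A : b₁ ∈ A := hnc.1 hcase
    refine Or.inr (Or.inl (fun v hv => ?_))
    rw [hA.mem_iff hH]
    rintro ⟨p⟩
    have hreach : (H.deleteEdges {f}).Reachable r v := by
      refine walk_transfer (A := Aᶜ) (fun a b hab ha => hA.closed_compl hab ha)
        (fun a b hab ha hb => ?_) p hA.1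
      rw [SimpleGraph.deleteEdges_adj] at hab ⊢
      refine ⟨hab.1, ?_⟩
      simp only [Set.mem_singleton_iff, hf]
      intro hh
      rw [Sym2.eq_iff] at hh
      rcases hh with ⟨rfl, rfl⟩ | ⟨rfl, rfl⟩
      · exact ha hcase
      · exact ha hb₁A
    exact ((hB.mem_iff hH v).mp hv) hreach
  · -- both endpoints of f outside A
    have hb₁A : b₁ ∉ A := fun h => hcase (hnc.2 h)
    by_cases hAB : (A ∩ B).Nonempty
    · obtain ⟨u, huA, huB⟩ := hAB
      refine Or.inl (fun v hv => ?_)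
      have hreach : (H.deleteEdges {f}).Reachable u v := by
        obtain ⟨p⟩ := hA.reach_of_mem hH huA hv
        refine walk_transfer (A := A) (fun a b hab ha => hA.closed hab ha)
          (fun a b hab ha hb => ?_) p huA
        rw [SimpleGraph.deleteEdges_adj] at hab ⊢
        refine ⟨hab.1, ?_⟩
        simp only [Set.mem_singleton_iff, hf]
        intro hh
        rw [Sym2.eq_iff] at hh
        rcases hh with ⟨rfl, rfl⟩ | ⟨rfl, rfl⟩
        · exact hcase ha
        · exact hb₁A ha
      by_contra hvB
      have := (hB.mem_iff hH v).mpr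
      have hrv : (H.deleteEdges {f}).Reachable r v := not_not.mp (fun h => hvB (this h))
      exact ((hB.mem_iff hH u).mp huB) (hrv.trans hreach.symm)
    · exact Or.inr (Or.inr (Set.not_nonempty_iff_eq_empty.mp hAB))

end Stmt6

namespace Stmt6

variable {α : Type} [DecidableEq α]

def IsLaminar (L : Finset (Finset α)) : Prop :=
  ∀ S ∈ L, ∀ T ∈ L, S ⊆ T ∨ T ⊆ S ∨ Disjoint S T

/-- The maximal members of a family. -/
noncomputable def maxl (L : Finset (Finset α)) : Finset (Finset α) :=
  L.filter (fun S => ∀ T ∈ L, ¬ S ⊂ T)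

lemma exists_maxl_above {L : Finset (Finset α)} {S : Finset α} (hS : S ∈ L) :
    ∃ M ∈ maxl L, S ⊆ M := by
  classical
  have hfin : (↑(L.filter (fun T => S ⊆ T)) : Set (Finset α)).Finite := (L.filter _).finite_toSet
  have hne : (↑(L.filter (fun T => S ⊆ T)) : Set (Finset α)).Nonempty :=
    ⟨S, by simp [hS]⟩
  obtain ⟨M, hM, hmax⟩ := Set.Finite.exists_maximalFor id _ hfin hne
  simp only [Finset.coe_filter, Set.mem_setOf_eq] at hM hmax
  refine ⟨M, ?_, hM.2⟩
  rw [maxl, Finset.mem_filter]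
  refine ⟨hM.1, fun T hT hMT => ?_⟩
  have : M = T := le_antisymm hMT.subset (hmax ⟨hT, hM.2.trans hMT.subset⟩ hMT.subset)
  exact hMT.ne this

lemma maxl_subset {L : Finset (Finset α)} : maxl L ⊆ L := Finset.filter_subset _ _

lemma maxl_disjoint {L : Finset (Finset α)} (hlam : IsLaminar L) {M M' : Finset α}
    (hM : M ∈ maxl L) (hM' : M' ∈ maxl L) (hne : M ≠ M') : Disjoint M M' := by
  rw [maxl, Finset.mem_filter] at hM hM'
  rcases hlam M hM.1 M' hM'.1 with h | h | h
  · exact absurd (ssubset_of_subset_of_ne h hne) (hM.2 M' hM'.1)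
  · exact absurd (ssubset_of_subset_of_ne h hne.symm) (hM'.2 M hM.1)
  · exact h

lemma part_sup {L : Finset (Finset α)} {M : Finset α} (hM : M ∈ maxl L) :
    (L.filter (fun S => S ⊆ M)).sup id = M := by
  apply le_antisymm
  · exact Finset.sup_le (fun S hS => (Finset.mem_filter.mp hS).2)
  · exact Finset.le_sup (f := id) (Finset.mem_filter.mpr ⟨maxl_subset hM, le_refl M⟩)

lemma sum_maxl_card_le {L : Finset (Finset α)} (hlam : IsLaminar L) :
    ∑ M ∈ maxl L, M.card ≤ (L.sup id).card := by
  rw [← Finset.card_biUnion (fun M hM M' hM' hne => maxl_disjoint hlam hM hM' hne)]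
  apply Finset.card_le_card
  intro x hx
  rw [Finset.mem_biUnion] at hx
  obtain ⟨M, hM, hxM⟩ := hx
  exact (Finset.le_sup (f := id) (maxl_subset hM)) hxM

/-- the decomposition step -/
lemma decomp_step {L : Finset (Finset α)} (hlam : IsLaminar L)
    (hne : ∀ S ∈ L, S.Nonempty)
    (hparts : ∀ M ∈ maxl L, (L.filter (fun S => S ⊆ M)).card + 1 ≤ 2 * M.card) :
    L.card + (maxl L).card ≤ 2 * (L.sup id).card := by
  have hcover : L ⊆ (maxl L).biUnion (fun M => L.filter (fun S => S ⊆ M)) := by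
    intro S hS
    obtain ⟨M, hM, hSM⟩ := exists_maxl_above hS
    exact Finset.mem_biUnion.mpr ⟨M, hM, Finset.mem_filter.mpr ⟨hS, hSM⟩⟩
  calc L.card + (maxl L).card
      ≤ ((maxl L).biUnion (fun M => L.filter (fun S => S ⊆ M))).card + (maxl L).card :=
        Nat.add_le_add_right (Finset.card_le_card hcover) _
    _ ≤ (∑ M ∈ maxl L, (L.filter (fun S => S ⊆ M)).card) + (maxl L).card :=
        Nat.add_le_add_right (Finset.card_biUnion_le) _
    _ = ∑ M ∈ maxl L, ((L.filter (fun S => S ⊆ M)).card + 1) := by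
        rw [Finset.sum_add_distrib, Finset.sum_const, smul_eq_mul, mul_one]
    _ ≤ ∑ M ∈ maxl L, 2 * M.card := Finset.sum_le_sum hparts
    _ = 2 * ∑ M ∈ maxl L, M.card := by rw [Finset.mul_sum]
    _ ≤ 2 * (L.sup id).card := Nat.mul_le_mul_left _ (sum_maxl_card_le hlam)

lemma laminar_bound_aux : ∀ n : ℕ, ∀ L : Finset (Finset α), L.card ≤ n → IsLaminar L →
    (∀ S ∈ L, S.Nonempty) → L.Nonempty → L.card + 1 ≤ 2 * (L.sup id).card := by
  intro n
  induction n with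
  | zero => intro L hL _ _ hne; simp [Finset.card_eq_zero.mp (Nat.le_zero.mp hL)] at hne
  | succ n IH =>
    intro L hL hlam hne hLne
    -- maximal family facts
    obtain ⟨S₀, hS₀⟩ := hLne
    obtain ⟨M₀, hM₀, _⟩ := exists_maxl_above hS₀
    by_cases hm : 2 ≤ (maxl L).card
    · -- at least two maximal elements
      have hparts : ∀ M ∈ maxl L, (L.filter (fun S => S ⊆ M)).card + 1 ≤ 2 * M.card := by
        intro M hM
        obtain ⟨M', hM', hMM'⟩ := Finset.exists_mem_ne hm M
        have hpsub : (L.filter (fun S => S ⊆ M)) ⊆ L.erase M' := by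
          intro S hS
          rw [Finset.mem_filter] at hS
          rw [Finset.mem_erase]
          refine ⟨fun hSM' => ?_, hS.1⟩
          subst hSM'
          have hd := maxl_disjoint hlam hM' hM hMM'
          have : S ⊆ S ∩ M := Finset.subset_inter (le_refl _) hS.2
          have hSne := hne S hS.1
          rw [Finset.disjoint_iff_inter_eq_empty] at hd
          rw [hd] at this
          exact hSne.ne_empty (Finset.subset_empty.mp this)
        have hcard : (L.filter (fun S => S ⊆ M)).card ≤ n := by
          calc (L.filter (fun S => S ⊆ M)).card ≤ (L.erase M').card := Finset.card_le_card hpsub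
            _ ≤ L.card - 1 := by rw [Finset.card_erase_of_mem (maxl_subset hM')]
            _ ≤ n := by omega
        have hpne : (L.filter (fun S => S ⊆ M)).Nonempty :=
          ⟨M, Finset.mem_filter.mpr ⟨maxl_subset hM, le_refl _⟩⟩
        have := IH _ hcard (fun S hS T hT => hlam S (Finset.filter_subset _ _ hS) T
          (Finset.filter_subset _ _ hT)) (fun S hS => hne S (Finset.filter_subset _ _ hS)) hpne
        rwa [part_sup hM] at this
      have := decomp_step hlam hne hparts
      omega
    · -- exactly one maximal element M₀
      have hmaxl : maxl L = {M₀} := by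
        apply Finset.eq_singleton_iff_unique_mem.mpr
        refine ⟨hM₀, fun M hM => ?_⟩
        by_contra hMM₀
        have : 2 ≤ (maxl L).card := Finset.one_lt_card.mpr ⟨M, hM, M₀, hM₀, hMM₀⟩
        exact hm this
      have hsupM₀ : L.sup id = M₀ := by
        apply le_antisymm
        · apply Finset.sup_le
          intro S hS
          obtain ⟨M, hM, hSM⟩ := exists_maxl_above hS
          rw [hmaxl, Finset.mem_singleton] at hM
          subst hM; exact hSM
        · exact Finset.le_sup (f := id) (maxl_subset hM₀)
      have hM₀ne : M₀.Nonempty := hne M₀ (maxl_subset hM₀)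
      set L' := L.erase M₀ with hL'
      by_cases hL'ne : L'.Nonempty
      · have hL'card : L'.card ≤ n := by
          have := Finset.card_erase_of_mem (maxl_subset hM₀)
          rw [← hL'] at this
          have hpos : 0 < L.card := Finset.card_pos.mpr ⟨S₀, hS₀⟩
          omega
        have hlam' : IsLaminar L' := fun S hS T hT =>
          hlam S (Finset.erase_subset _ _ hS) T (Finset.erase_subset _ _ hT)
        have hne' : ∀ S ∈ L', S.Nonempty := fun S hS => hne S (Finset.erase_subset _ _ hS)
        have hLcard : L.card = L'.card + 1 := by
          have := Finset.card_erase_of_mem (maxl_subset hM₀)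
          rw [← hL'] at this
          have hpos : 0 < L.card := Finset.card_pos.mpr ⟨S₀, hS₀⟩
          omega
        by_cases hsup' : L'.sup id = M₀
        · -- L' has at least two maximal elements
          have hm' : 2 ≤ (maxl L').card := by
            by_contra hm'
            obtain ⟨S₁, hS₁⟩ := hL'ne
            obtain ⟨M₁, hM₁, _⟩ := exists_maxl_above hS₁
            have hmaxl' : maxl L' = {M₁} := by
              apply Finset.eq_singleton_iff_unique_mem.mpr
              refine ⟨hM₁, fun M hM => ?_⟩
              by_contra hMM₁
              exact hm' (Finset.one_lt_card.mpr ⟨M, hM, M₁, hM₁, hMM₁⟩)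
            have hsub : L'.sup id ≤ M₁ := by
              apply Finset.sup_le
              intro S hS
              obtain ⟨M, hM, hSM⟩ := exists_maxl_above hS
              rw [hmaxl', Finset.mem_singleton] at hM
              subst hM; exact hSM
            rw [hsup'] at hsub
            -- M₀ ⊆ M₁ ∈ L', but M₀ is maximal in L and M₁ ≠ M₀
            have hM₁L : M₁ ∈ L' := maxl_subset hM₁
            have hM₁ne : M₁ ≠ M₀ := Finset.ne_of_mem_erase hM₁L
            have hM₁L2 : M₁ ∈ L := Finset.erase_subset _ _ hM₁L
            rw [maxl, Finset.mem_filter] at hM₀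
            exact hM₀.2 M₁ hM₁L2 (ssubset_of_subset_of_ne hsub hM₁ne.symm)
          have hparts' : ∀ M ∈ maxl L', (L'.filter (fun S => S ⊆ M)).card + 1 ≤ 2 * M.card := by
            intro M hM
            have hcard : (L'.filter (fun S => S ⊆ M)).card ≤ n :=
              le_trans (Finset.card_le_card (Finset.filter_subset _ _)) hL'card
            have hpne : (L'.filter (fun S => S ⊆ M)).Nonempty :=
              ⟨M, Finset.mem_filter.mpr ⟨maxl_subset hM, le_refl _⟩⟩
            have := IH _ hcard (fun S hS T hT => hlam' S (Finset.filter_subset _ _ hS) T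
              (Finset.filter_subset _ _ hT)) (fun S hS => hne' S (Finset.filter_subset _ _ hS)) hpne
            rwa [part_sup hM] at this
          have hds := decomp_step hlam' hne' hparts'
          rw [hsup'] at hds
          rw [hsupM₀, hLcard]
          omega
        · -- strict: sup L' ⊊ M₀
          have hsub : L'.sup id ≤ M₀ := by
            apply Finset.sup_le
            intro S hS
            have := Finset.le_sup (f := id) (s := L) (Finset.erase_subset _ _ hS)
            rw [hsupM₀] at this
            exact this
          have hcard' : (L'.sup id).card < M₀.card :=
            Finset.card_lt_card (lt_of_le_of_ne hsub hsup')
          have := IH _ hL'card hlam' hne' hL'ne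
          rw [hsupM₀, hLcard]
          omega
      · -- L = {M₀}
        have hLsing : L = {M₀} := by
          apply Finset.eq_singleton_iff_unique_mem.mpr
          refine ⟨maxl_subset hM₀, fun S hS => ?_⟩
          by_contra hSM₀
          exact hL'ne ⟨S, Finset.mem_erase.mpr ⟨hSM₀, hS⟩⟩
        rw [hLsing]
        have h1 : ({M₀} : Finset (Finset α)).sup id = M₀ := Finset.sup_singleton
        rw [h1]
        simp only [Finset.card_singleton]
        have := Finset.card_pos.mpr hM₀ne
        omega

/-- A laminar family of distinct nonempty finite sets has at most `2 * |union|` members. -/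
lemma laminar_bound (L : Finset (Finset α)) (hlam : IsLaminar L)
    (hne : ∀ S ∈ L, S.Nonempty) : L.card ≤ 2 * (L.sup id).card := by
  rcases L.eq_empty_or_nonempty with rfl | hLne
  · simp
  · have := laminar_bound_aux L.card L (le_refl _) hlam hne hLne
    omega

end Stmt6

namespace Stmt6
-- assume contents of a.lean, b.lean already present (will concatenate)

variable {V : Type} [Fintype V] {G : SimpleGraph V} {M : Matroid (Sym2 V)}
  {X : Finset (Sym2 V)} {r : V} {e f : Sym2 V} {A B : Set V}

/-- Key step 1: every element of `closure X` not in `X` has a bridge side. -/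
lemma key_side (hG : G.Connected) (hME : M.E = G.edgeSet)
    (hMindep : ∀ F : Set (Sym2 V), M.Indep F ↔ F ⊆ G.edgeSet ∧ (G.deleteEdges F).Connected)
    (hXindep : M.Indep (↑X : Set (Sym2 V))) (r : V)
    (he : e ∈ M.closure ↑X) (heX : e ∉ X) :
    ∃ A : Set V, IsSide (G.deleteEdges (↑X : Set (Sym2 V))) r e A ∧
      ∀ g ∈ G.edgeSet, cross A g → g = e ∨ g ∈ X := by
  classical
  have heE : e ∈ G.edgeSet := hME ▸ M.closure_subset_ground _ he
  have hH : (G.deleteEdges (↑X : Set (Sym2 V))).Connected := ((hMindep _).mp hXindep).2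
  have hXsub : (↑X : Set (Sym2 V)) ⊆ G.edgeSet := ((hMindep _).mp hXindep).1
  -- dependence of insert e X
  have hdep : M.Dep (insert e (↑X : Set (Sym2 V))) := by
    rcases (hXindep.mem_closure_iff).mp he with h | h
    · exact h
    · exact absurd h (by simpa using heX)
  have hnotconn : ¬ (G.deleteEdges (insert e (↑X : Set (Sym2 V)))).Connected := by
    intro hc
    exact hdep.not_indep ((hMindep _).mpr ⟨by rw [← hME]; exact hdep.subset_ground, hc⟩)
  -- extract a cut
  rw [connected_iff_cross] at hnotconn
  push_neg at hnotconn
  obtain ⟨A₀, hA₀ne, hA₀cne, hA₀⟩ := hnotconn hG.nonempty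
  -- no crossing edges outside insert e X
  have hA₀' : ∀ g ∈ G.edgeSet, cross A₀ g → g = e ∨ g ∈ X := by
    intro g hg hcr
    by_contra hc
    push_neg at hc
    refine hA₀ g ?_ hcr
    rw [SimpleGraph.edgeSet_deleteEdges]
    exact ⟨hg, by simp [hc.1, hc.2]⟩
  -- normalize the root out of the cut
  obtain ⟨A, hAne, hAcne, hA, hr⟩ :
      ∃ A : Set V, A.Nonempty ∧ Aᶜ.Nonempty ∧
        (∀ g ∈ G.edgeSet, cross A g → g = e ∨ g ∈ X) ∧ r ∉ A := by
    by_cases hrA : r ∈ A₀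
    · refine ⟨A₀ᶜ, hA₀cne, by simpa using hA₀ne, fun g hg hcr => ?_, by simp [hrA]⟩
      exact hA₀' g hg (cross_compl.mp hcr)
    · exact ⟨A₀, hA₀ne, hA₀cne, hA₀', hrA⟩
  -- e crosses A
  have hcrosse : cross A e := by
    rw [connected_iff_cross] at hH
    obtain ⟨g, hg, hgcr⟩ := hH.2 A hAne hAcne
    rw [SimpleGraph.edgeSet_deleteEdges] at hg
    rcases hA g hg.1 hgcr with rfl | h
    · exact hgcr
    · exact absurd h (by simpa using hg.2)
  refine ⟨A, ⟨hr, hAne, ?_, hcrosse, ?_⟩, hA⟩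
  · rw [SimpleGraph.edgeSet_deleteEdges]
    exact ⟨heE, by simpa using heX⟩
  · intro g hg hcr
    rw [SimpleGraph.edgeSet_deleteEdges] at hg
    rcases hA g hg.1 hcr with rfl | h
    · rfl
    · exact absurd h (by simpa using hg.2)

/-- Key step 2: a non-loop has a crossing edge from `X`. -/
lemma key_nonloop (hG : G.Connected) (hME : M.E = G.edgeSet)
    (hMindep : ∀ F : Set (Sym2 V), M.Indep F ↔ F ⊆ G.edgeSet ∧ (G.deleteEdges F).Connected)
    (heE : e ∈ G.edgeSet) (henl : e ∉ M.closure ∅)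
    (hAne : A.Nonempty) (hAcne : Aᶜ.Nonempty)
    (hA : ∀ g ∈ G.edgeSet, cross A g → g = e ∨ g ∈ X) :
    ∃ x ∈ X, cross A x := by
  classical
  by_contra hc
  push_neg at hc
  apply henl
  have hdep : M.Dep {e} := by
    refine ⟨fun hi => ?_, by rw [hME]; simpa using heE⟩
    have hconn := ((hMindep _).mp hi).2
    rw [connected_iff_cross] at hconn
    obtain ⟨g, hg, hgcr⟩ := hconn.2 A hAne hAcne
    rw [SimpleGraph.edgeSet_deleteEdges] at hg
    rcases hA g hg.1 hgcr with rfl | h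
    · exact hg.2 rfl
    · exact hc g h hgcr
  have := (M.empty_indep.mem_closure_iff (x := e)).mpr
  apply this
  left
  simpa using hdep

/-- Key step 4: equal crossing pattern on `X` forces parallel elements. -/
lemma key_parallel (hG : G.Connected) (hME : M.E = G.edgeSet)
    (hMindep : ∀ F : Set (Sym2 V), M.Indep F ↔ F ⊆ G.edgeSet ∧ (G.deleteEdges F).Connected)
    {H : SimpleGraph V} (hHdef : H = G.deleteEdges (↑X : Set (Sym2 V)))
    (hef : e ≠ f) (heX : e ∉ X) (hfX : f ∉ X) (hfE : f ∈ G.edgeSet)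
    (henl : e ∉ M.closure ∅)
    (hA : IsSide H r e A) (hB : IsSide H r f B)
    (hA2 : ∀ g ∈ G.edgeSet, cross A g → g = e ∨ g ∈ X)
    (hB2 : ∀ g ∈ G.edgeSet, cross B g → g = f ∨ g ∈ X)
    (hcr : ∀ x ∈ X, (cross A x ↔ cross B x)) :
    f ∈ M.closure {e} := by
  classical
  have heE : e ∈ G.edgeSet := by
    have := hA.2.2.1
    rw [hHdef, SimpleGraph.edgeSet_deleteEdges] at this
    exact this.1
  -- e is independent
  have hei : M.Indep {e} := by
    by_contra hi
    have hdep : M.Dep {e} := by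
      rw [Matroid.dep_iff]
      exact ⟨hi, by rw [hME]; simpa using heE⟩
    exact henl ((M.empty_indep.mem_closure_iff (x := e)).mpr (Or.inl (by simpa using hdep)))
  rw [hei.mem_closure_iff]
  left
  refine ⟨fun hi => ?_, by rw [hME]; intro g hg; simp at hg; rcases hg with rfl | rfl <;> assumption⟩
  have hconn := ((hMindep _).mp hi).2
  rw [connected_iff_cross] at hconn
  set D := symmDiff A B with hD
  -- e crosses D
  have hnecr : ¬ cross B e := by
    intro h
    rcases hB2 e heE h with h' | h'
    · exact hef h'
    · exact heX h'
  have hcre : cross D e := cross_symmDiff.mpr (by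
    constructor
    · intro _; exact hnecr
    · intro _; exact hA.2.2.2.1)
  have hDne : D.Nonempty := by
    obtain ⟨a, b, _, ha, _⟩ := hcre
    exact ⟨a, ha⟩
  have hDcne : Dᶜ.Nonempty := ⟨r, by
    simp only [Set.mem_compl_iff, hD, Set.mem_symmDiff]
    push_neg
    exact ⟨fun h => absurd h hA.1, fun h => absurd h hB.1⟩⟩
  obtain ⟨g, hg, hgcr⟩ := hconn.2 D hDne hDcne
  rw [SimpleGraph.edgeSet_deleteEdges] at hg
  have hgE := hg.1
  have hgef : g ≠ f ∧ g ≠ e := by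
    constructor <;> intro h <;> subst h <;> simp at hg <;> tauto
  rw [cross_symmDiff] at hgcr
  by_cases hgX : g ∈ X
  · rw [hcr g hgX] at hgcr
    tauto
  · have h1 : ¬ cross A g := by
      intro h
      rcases hA2 g hgE h with h' | h'
      · exact hgef.2 h'
      · exact hgX h'
    have h2 : ¬ cross B g := by
      intro h
      rcases hB2 g hgE h with h' | h'
      · exact hgef.1 h'
      · exact hgX h'
    tauto

end Stmt6

open Stmt6 in
/-- Cographic matroids are `O(k)`-coverable: there is a constant `C` such
that for the cographic matroid `M` of any finite connected graph `G` (a set `F` of edges is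
independent iff `G − F` is connected) and every independent `X` with `|X| ≤ k` (`k ≥ 1`),
there is `F` with `|F| ≤ C·k` and `span(X) = ⋃_{f ∈ F} span(f)`. -/
theorem stmt_6 :
    ∃ C : ℕ, ∀ (V : Type) (_ : Fintype V) (G : SimpleGraph V), G.Connected →
      ∀ M : Matroid (Sym2 V), M.E = G.edgeSet →
        (∀ F : Set (Sym2 V), M.Indep F ↔ F ⊆ G.edgeSet ∧ (G.deleteEdges F).Connected) →
        ∀ k : ℕ, 0 < k → ∀ X : Finset (Sym2 V), M.Indep (↑X : Set (Sym2 V)) → X.card ≤ k →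
          ∃ F : Finset (Sym2 V), F.card ≤ C * k ∧
            M.closure (↑X : Set (Sym2 V)) = ⋃ f ∈ F, M.closure {f} := by
  classical
  refine ⟨5, fun V _ G hG M hME hMindep k hk X hXindep hXcard => ?_⟩
  haveI := Classical.decEq V
  obtain ⟨r⟩ := hG.nonempty
  rcases X.eq_empty_or_nonempty with rfl | hXne
  · -- empty independent set
    simp only [Finset.coe_empty]
    rcases Set.eq_empty_or_nonempty (M.closure ∅) with hcl | ⟨f₀, hf₀⟩
    · refine ⟨∅, by simp, ?_⟩
      simp [hcl]
    · refine ⟨{f₀}, by simp; omega, ?_⟩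
      have h2 : M.closure ∅ = M.closure {f₀} := by
        apply le_antisymm
        · exact M.closure_subset_closure (Set.empty_subset _)
        · exact M.closure_subset_closure_of_subset_closure (Set.singleton_subset_iff.mpr hf₀)
      rw [h2]
      simp
  · -- main case
    have hXsub : (↑X : Set (Sym2 V)) ⊆ G.edgeSet := ((hMindep _).mp hXindep).1
    have hH : (G.deleteEdges (↑X : Set (Sym2 V))).Connected := ((hMindep _).mp hXindep).2
    set N : Set (Sym2 V) := M.closure ↑X \ (↑X ∪ M.closure ∅) with hN
    have key1 : ∀ e ∈ N, ∃ A : Set V,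
        IsSide (G.deleteEdges (↑X : Set (Sym2 V))) r e A ∧
        ∀ g ∈ G.edgeSet, cross A g → g = e ∨ g ∈ X := by
      intro e he
      exact key_side hG hME hMindep hXindep r he.1 (by
        intro h; exact he.2 (Or.inl h))
    choose! A hA1 hA2 using key1
    -- endpoints
    have sym2_rep : ∀ e : Sym2 V, ∃ ab : V × V, e = s(ab.1, ab.2) :=
      fun e => Sym2.inductionOn e (fun a b => ⟨(a, b), rfl⟩)
    choose ends hends using sym2_rep
    set T : Finset V := X.biUnion (fun x => {(ends x).1, (ends x).2}) with hT
    have hTcard : T.card ≤ 2 * X.card := by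
      calc T.card ≤ ∑ x ∈ X, ({(ends x).1, (ends x).2} : Finset V).card :=
            Finset.card_biUnion_le
        _ ≤ ∑ _x ∈ X, 2 := Finset.sum_le_sum (fun x _ =>
            (Finset.card_insert_le _ _).trans (by simp))
        _ = 2 * X.card := by rw [Finset.sum_const, smul_eq_mul, mul_comm]
    have hendsT : ∀ x ∈ X, (ends x).1 ∈ T ∧ (ends x).2 ∈ T := by
      intro x hx
      constructor <;> exact Finset.mem_biUnion.mpr ⟨x, hx, by simp⟩
    have hcrT : ∀ x ∈ X, ∀ A' B' : Set V, (∀ v ∈ T, (v ∈ A' ↔ v ∈ B')) →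
        (cross A' x ↔ cross B' x) := by
      intro x hx A' B' hiff
      obtain ⟨h1, h2⟩ := hendsT x hx
      rw [hends x, cross_mk, cross_mk, hiff _ h1, hiff _ h2]
    -- cross gives an endpoint of x in A' ∩ T
    have hcrmem : ∀ x ∈ X, ∀ A' : Set V, cross A' x → ∃ v ∈ T, v ∈ A' := by
      intro x hx A' hcr
      obtain ⟨a, b, hab, ha, _⟩ := hcr
      obtain ⟨h1, h2⟩ := hendsT x hx
      have := (hends x).symm.trans hab
      rw [Sym2.eq_iff] at this
      rcases this with ⟨hh, _⟩ | ⟨_, hh⟩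
      · exact ⟨(ends x).1, h1, hh ▸ ha⟩
      · exact ⟨(ends x).2, h2, hh ▸ ha⟩
    -- the finite set of nonloop new elements
    have hNfin : N.Finite := Set.toFinite N
    set NF : Finset (Sym2 V) := hNfin.toFinset with hNF
    have hNFmem : ∀ {g : Sym2 V}, g ∈ NF ↔ g ∈ N := fun {g} => Set.Finite.mem_toFinset _
    set tr : Sym2 V → Finset V := fun e => T.filter (fun v => v ∈ A e) with htr
    set TS : Finset (Finset V) := NF.image tr with hTS
    -- membership facts for N
    have hNprop : ∀ g ∈ N, g ∈ M.closure ↑X ∧ g ∉ X ∧ g ∉ M.closure ∅ ∧ g ∈ G.edgeSet := by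
      intro g hg
      have hgE : g ∈ G.edgeSet := hME ▸ M.closure_subset_ground _ hg.1
      exact ⟨hg.1, fun h => hg.2 (Or.inl h), fun h => hg.2 (Or.inr h), hgE⟩
    -- traces are nonempty
    have hTSne : ∀ S ∈ TS, S.Nonempty := by
      intro S hS
      obtain ⟨e, heNF, rfl⟩ := Finset.mem_image.mp hS
      have heN := hNFmem.mp heNF
      obtain ⟨_, _, henl, heE⟩ := hNprop e heN
      have hside := hA1 e heN
      obtain ⟨x, hx, hcr⟩ := key_nonloop (X := X) hG hME hMindep heE henl
        hside.2.1 ⟨r, hside.1⟩ (hA2 e heN)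
      obtain ⟨v, hvT, hvA⟩ := hcrmem x hx _ hcr
      exact ⟨v, Finset.mem_filter.mpr ⟨hvT, hvA⟩⟩
    -- traces are laminar
    have hTSlam : IsLaminar TS := by
      intro S hS S' hS'
      obtain ⟨e, heNF, rfl⟩ := Finset.mem_image.mp hS
      obtain ⟨f, hfNF, rfl⟩ := Finset.mem_image.mp hS'
      have heN := hNFmem.mp heNF
      have hfN := hNFmem.mp hfNF
      by_cases hef : e = f
      · subst hef; exact Or.inl (le_refl _)
      · rcases (hA1 e heN).laminar hH (hA1 f hfN) hef with h | h | h
        · exact Or.inl (fun v hv => by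
            rw [htr] at hv ⊢
            rw [Finset.mem_filter] at hv ⊢
            exact ⟨hv.1, h hv.2⟩)
        · exact Or.inr (Or.inl (fun v hv => by
            rw [htr] at hv ⊢
            rw [Finset.mem_filter] at hv ⊢
            exact ⟨hv.1, h hv.2⟩))
        · refine Or.inr (Or.inr (Finset.disjoint_left.mpr (fun v hv hv' => ?_)))
          rw [htr, Finset.mem_filter] at hv hv'
          have : v ∈ A e ∩ A f := ⟨hv.2, hv'.2⟩
          rw [h] at this
          exact this
    -- cardinality of the trace family
    have hTScard : TS.card ≤ 4 * X.card := by
      have h1 := laminar_bound TS hTSlam hTSne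
      have h2 : TS.sup id ≤ T := by
        apply Finset.sup_le
        intro S hS
        obtain ⟨e, _, rfl⟩ := Finset.mem_image.mp hS
        exact Finset.filter_subset _ _
      calc TS.card ≤ 2 * (TS.sup id).card := h1
        _ ≤ 2 * T.card := Nat.mul_le_mul_left _ (Finset.card_le_card h2)
        _ ≤ 4 * X.card := by omega
    -- representatives
    have hrepex : ∀ S ∈ TS, ∃ g, g ∈ N ∧ tr g = S := by
      intro S hS
      obtain ⟨e, heNF, rfl⟩ := Finset.mem_image.mp hS
      exact ⟨e, hNFmem.mp heNF, rfl⟩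
    haveI : Inhabited (Sym2 V) := ⟨s(r, r)⟩
    choose! rep hrep1 hrep2 using hrepex
    set R : Finset (Sym2 V) := TS.image rep with hR
    have hRcard : R.card ≤ 4 * X.card := (Finset.card_image_le).trans hTScard
    refine ⟨X ∪ R, ?_, ?_⟩
    · calc (X ∪ R).card ≤ X.card + R.card := Finset.card_union_le _ _
        _ ≤ X.card + 4 * X.card := by omega
        _ ≤ 5 * k := by omega
    · apply le_antisymm
      · -- closure X ⊆ union
        intro g hg
        rw [Set.mem_iUnion₂]
        by_cases hgX : g ∈ X
        · exact ⟨g, Finset.mem_union_left _ hgX,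
            M.mem_closure_self g (by rw [hME]; exact hXsub hgX)⟩
        · by_cases hgl : g ∈ M.closure ∅
          · obtain ⟨x₀, hx₀⟩ := hXne
            exact ⟨x₀, Finset.mem_union_left _ hx₀,
              M.closure_subset_closure (Set.empty_subset _) hgl⟩
          · have hgN : g ∈ N := ⟨hg, fun h => h.elim hgX hgl⟩
            have hgTS : tr g ∈ TS := Finset.mem_image.mpr ⟨g, hNFmem.mpr hgN, rfl⟩
            set e := rep (tr g) with he
            have heN : e ∈ N := hrep1 _ hgTS
            have htreq : tr e = tr g := hrep2 _ hgTS
            have heR : e ∈ R := Finset.mem_image.mpr ⟨tr g, hgTS, rfl⟩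
            by_cases hef : e = g
            · exact ⟨g, Finset.mem_union_right _ (hef ▸ heR),
                M.mem_closure_self g (by rw [hME]; exact (hNprop g hgN).2.2.2)⟩
            · obtain ⟨_, heX, henl, heE⟩ := hNprop e heN
              obtain ⟨_, hgX', _, hgE⟩ := hNprop g hgN
              have hcr : ∀ x ∈ X, (cross (A e) x ↔ cross (A g) x) := by
                intro x hx
                refine hcrT x hx _ _ (fun v hv => ?_)
                have := Finset.ext_iff.mp htreq v
                rw [htr] at this
                simp only [Finset.mem_filter] at this
                constructor
                · intro h; exact (this.mp ⟨hv, h⟩).2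
                · intro h; exact (this.mpr ⟨hv, h⟩).2
              have := key_parallel hG hME hMindep (H := G.deleteEdges (↑X : Set (Sym2 V)))
                rfl hef heX hgX' hgE henl (hA1 e heN) (hA1 g hgN)
                (hA2 e heN) (hA2 g hgN) hcr
              exact ⟨e, Finset.mem_union_right _ heR, this⟩
      · -- union ⊆ closure X
        intro g hg
        rw [Set.mem_iUnion₂] at hg
        obtain ⟨f, hfF, hgf⟩ := hg
        rcases Finset.mem_union.mp hfF with hfX | hfR
        · exact M.closure_subset_closure (Set.singleton_subset_iff.mpr hfX) hgf
        · obtain ⟨S, hS, rfl⟩ := Finset.mem_image.mp hfR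
          have hfN : rep S ∈ N := hrep1 _ hS
          exact M.closure_subset_closure_of_subset_closure
            (Set.singleton_subset_iff.mpr hfN.1) hgf
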